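/- (Naimark dilation, used to prove that projective measurements suffice in any contextuality scenario with only trivial measurement equivalences.) Let d, K ≥ 1 and let {M_k}_{k ∈ Fin K} be a POVM on ℂ^d, i.e. each M_k is a positive semidefinite d×d complex matrix and Σ_k M_k = I_d. Then there exists a unitary matrix U on ℂ^K ⊗ ℂ^d (i.e. a unitary (K·d)×(K·d) complex matrix, with the tensor product realised as the Kronecker product) such that, setting Π_k = U (E_{kk} ⊗ I_d) U†, where E_{kk} is the K×K matrix with a single 1 in entry (k,k): each Π_k is Hermitian and idempotent, Σ_k Π_k = I_{Kd}, Π_k Π_l = 0 for k ≠ l, and for every d×d complex matrix ρ, tr((E_{00} ⊗ ρ) Π_k) = tr(ρ M_k) for all k ∈ Fin K. -/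

import Mathlib

open Matrix ComplexOrder Kronecker

theorem naimark_dilation (d K : ℕ) (hd : 1 ≤ d) (hK : 1 ≤ K)
    (M : Fin K → Matrix (Fin d) (Fin d) ℂ)
    (hM : ∀ k, (M k).PosSemidef) (hMsum : ∑ k, M k = 1) :
    ∃ U : Matrix (Fin K × Fin d) (Fin K × Fin d) ℂ,
      U * Uᴴ = 1 ∧ Uᴴ * U = 1 ∧
      ∃ Pi : Fin K → Matrix (Fin K × Fin d) (Fin K × Fin d) ℂ,
        (∀ k, Pi k =
          U * (Matrix.single k k (1 : ℂ) ⊗ₖ (1 : Matrix (Fin d) (Fin d) ℂ)) * Uᴴ) ∧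
        (∀ k, (Pi k).IsHermitian) ∧
        (∀ k, Pi k * Pi k = Pi k) ∧
        (∑ k, Pi k = 1) ∧
        (∀ k l, k ≠ l → Pi k * Pi l = 0) ∧
        (∀ ρ : Matrix (Fin d) (Fin d) ℂ, ∀ k,
          ((Matrix.single (⟨0, hK⟩ : Fin K) (⟨0, hK⟩ : Fin K) (1 : ℂ) ⊗ₖ ρ) *
            Pi k).trace = (ρ * M k).trace) := by
  classical
  set e0 : Fin K := ⟨0, hK⟩ with he0
  open scoped MatrixOrder in
  set S : Fin K → Matrix (Fin d) (Fin d) ℂ := fun k => CFC.sqrt (M k) with hSdef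
  open scoped MatrixOrder in
  have hSher : ∀ k, (S k).IsHermitian :=
    fun k => (Matrix.nonneg_iff_posSemidef.mp (CFC.sqrt_nonneg (M k))).1
  open scoped MatrixOrder in
  have hSsq : ∀ k, S k * S k = M k :=
    fun k => CFC.sqrt_mul_sqrt_self (M k) (Matrix.nonneg_iff_posSemidef.mpr (hM k))
  -- the candidate orthonormal rows
  set v : Fin K × Fin d → EuclideanSpace ℂ (Fin K × Fin d) :=
    fun p => WithLp.toLp 2 (fun q : Fin K × Fin d => S q.1 p.2 q.2) with hvdef
  have hvo : Orthonormal ℂ (({p | p.1 = e0} : Set (Fin K × Fin d)).restrict v) := by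
    rw [orthonormal_iff_ite]
    rintro ⟨⟨p1, p2⟩, hp⟩ ⟨⟨q1, q2⟩, hq⟩
    simp only [Set.mem_setOf_eq] at hp hq
    subst hp; subst hq
    simp only [Set.restrict_apply, PiLp.inner_apply, RCLike.inner_apply']
    simp only [hvdef, WithLp.ofLp_toLp]
    rw [Fintype.sum_prod_type]
    change ∑ x, ∑ y, (starRingEnd ℂ) (S x p2 y) * S x q2 y = _
    have : ∀ l : Fin K, ∑ j : Fin d, (starRingEnd ℂ) (S l p2 j) * S l q2 j
        = M l q2 p2 := by
      intro l
      rw [← hSsq l, Matrix.mul_apply]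
      refine Finset.sum_congr rfl fun j _ => ?_
      rw [mul_comm]
      congr 1
      exact (hSher l).apply j p2
    rw [Finset.sum_congr rfl fun l _ => this l]
    have : ∑ l, M l q2 p2 = (1 : Matrix (Fin d) (Fin d) ℂ) q2 p2 := by
      rw [← hMsum]; simp [Matrix.sum_apply]
    rw [this]
    simp [Matrix.one_apply, Subtype.ext_iff, Prod.ext_iff, eq_comm]
  obtain ⟨b, hb⟩ := hvo.exists_orthonormalBasis_extension_of_card_eq (by simp)
  set U : Matrix (Fin K × Fin d) (Fin K × Fin d) ℂ := fun p q => b p q with hUdef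
  have hU0 : ∀ i : Fin d, ∀ q, U (e0, i) q = S q.1 i q.2 := by
    intro i q
    have h := hb (e0, i) (by simp)
    have := congrArg (fun x => x q) h
    simpa [hUdef, hvdef] using this
  have horth := orthonormal_iff_ite.mp b.orthonormal
  have hUU : U * Uᴴ = 1 := by
    ext p q
    have h := horth q p
    simp only [PiLp.inner_apply, RCLike.inner_apply'] at h
    simp only [Matrix.mul_apply, Matrix.conjTranspose_apply, Matrix.one_apply, hUdef]
    calc ∑ r, b p r * star (b q r)
        = ∑ r, (starRingEnd ℂ) (b q r) * b p r := by
          refine Finset.sum_congr rfl fun r _ => ?_; rw [mul_comm]; rfl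
      _ = if q = p then 1 else 0 := h
      _ = if p = q then 1 else 0 := by simp [eq_comm]
  have hUU' : Uᴴ * U = 1 := mul_eq_one_comm.mp hUU
  set E : Fin K → Matrix (Fin K) (Fin K) ℂ := fun k => Matrix.single k k 1 with hEdef
  set A : Fin K → Matrix (Fin K × Fin d) (Fin K × Fin d) ℂ :=
    fun k => E k ⊗ₖ (1 : Matrix (Fin d) (Fin d) ℂ) with hAdef
  have key : ∀ X Y : Matrix (Fin K × Fin d) (Fin K × Fin d) ℂ,
      (U * X * Uᴴ) * (U * Y * Uᴴ) = U * (X * Y) * Uᴴ := by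
    intro X Y
    simp only [Matrix.mul_assoc]
    rw [← Matrix.mul_assoc Uᴴ U, hUU', Matrix.one_mul]
  have hAherm : ∀ k, (A k)ᴴ = A k := by
    intro k
    ext ⟨a, i⟩ ⟨c, j⟩
    simp only [Matrix.conjTranspose_apply, hAdef, Matrix.kronecker_apply, hEdef,
      Matrix.single, Matrix.one_apply, Matrix.of_apply]
    by_cases h1 : k = a <;> by_cases h2 : k = c <;> by_cases h3 : i = j <;>
      simp [h1, h2, h3, eq_comm]
  have hAmul : ∀ k l, A k * A l = if k = l then A k else 0 := by
    intro k l
    by_cases h : k = l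
    · subst h
      simp only [hAdef, ← Matrix.mul_kronecker_mul, hEdef, if_pos rfl]
      simp
    · simp only [hAdef, ← Matrix.mul_kronecker_mul, hEdef, if_neg h]
      have h0 : Matrix.single k k (1:ℂ) * Matrix.single l l (1:ℂ) = 0 := by
        simp [h]
      rw [h0, Matrix.zero_kronecker]
  have hAsum : ∑ k, A k = 1 := by
    ext ⟨a, i⟩ ⟨c, j⟩
    simp only [Matrix.sum_apply, hAdef, Matrix.kronecker_apply, hEdef, Matrix.single,
      Matrix.one_apply, Matrix.of_apply, ite_and, ite_mul, one_mul, zero_mul, Prod.mk.injEq]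
    rw [Finset.sum_ite_eq' Finset.univ a fun x => if x = c then (if i = j then (1:ℂ) else 0) else 0]
    by_cases h1 : a = c <;> by_cases h2 : i = j <;> simp [h1, h2]
  refine ⟨U, hUU, hUU', fun k => U * A k * Uᴴ, fun k => rfl, ?_, ?_, ?_, ?_, ?_⟩
  · intro k
    show (U * A k * Uᴴ)ᴴ = U * A k * Uᴴ
    rw [Matrix.conjTranspose_mul, Matrix.conjTranspose_mul, Matrix.conjTranspose_conjTranspose,
      hAherm, Matrix.mul_assoc]
  · intro k
    rw [key, hAmul, if_pos rfl]
  · rw [← Finset.sum_mul, ← Finset.mul_sum, hAsum, Matrix.mul_one, hUU]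
  · intro k l hkl
    rw [key, hAmul, if_neg hkl, Matrix.mul_zero, Matrix.zero_mul]
  · intro ρ k
    have hblock : ∀ i j : Fin d, (U * A k * Uᴴ) (e0, j) (e0, i) = M k j i := by
      intro i j
      simp only [Matrix.mul_apply, Matrix.conjTranspose_apply, hAdef,
        Matrix.kroneckerMap_apply, hEdef, hU0]
      rw [Fintype.sum_prod_type]
      simp only [Fintype.sum_prod_type, Matrix.kroneckerMap_apply, Matrix.single,
        Matrix.of_apply, Matrix.one_apply, ite_and, mul_ite, ite_mul, mul_zero, zero_mul,
        mul_one, one_mul, Finset.sum_ite_irrel, Finset.sum_ite_eq, Finset.sum_ite_eq',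
        Finset.mem_univ, if_true, Finset.sum_const_zero]
      rw [← hSsq k, Matrix.mul_apply]
      exact Finset.sum_congr rfl fun m _ => by rw [(hSher k).apply m i]
    have hL : ((Matrix.single e0 e0 (1 : ℂ) ⊗ₖ ρ) * (U * A k * Uᴴ)).trace
        = ∑ i : Fin d, ∑ j : Fin d, ρ i j * (U * A k * Uᴴ) (e0, j) (e0, i) := by
      rw [Matrix.trace]
      simp only [Matrix.diag_apply, Matrix.mul_apply]
      rw [Fintype.sum_prod_type]
      simp only [Fintype.sum_prod_type, Matrix.kroneckerMap_apply, Matrix.single,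
        Matrix.of_apply, ite_and, mul_ite, ite_mul, mul_zero, zero_mul, mul_one, one_mul,
        Finset.sum_ite_irrel, Finset.sum_ite_eq, Finset.sum_ite_eq', Finset.mem_univ, if_true,
        Finset.sum_const_zero]
    rw [hL]
    have hR : (ρ * M k).trace = ∑ i : Fin d, ∑ j : Fin d, ρ i j * M k j i := by
      simp [Matrix.trace, Matrix.diag_apply, Matrix.mul_apply]
    rw [hR]
    exact Finset.sum_congr rfl fun i _ => Finset.sum_congr rfl fun j _ => by rw [hblock]
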